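/- Let τ be a complex number with Im τ > 0, let q = e^{2πiτ}, let m, n be positive integers, and let y₁, y₂, …, y_n be complex numbers with y₁ + y₂ + ⋯ + y_n = 0. Then ∑_{k=0}^{mn-1} ∏_{j=1}^{n} θ₃(z + y_j + kπ/(mn) | τ) = G_{m,n}(y₁, …, y_n | τ) · θ₃(mnz | m²nτ) for every complex number z, where G_{m,n}(y₁, …, y_n | τ) = mn · ∑_{r₁,…,r_n ∈ ℤ, r₁+⋯+r_n = 0} q^{(r₁²+⋯+r_n²)/2} e^{2i(r₁y₁+⋯+r_ny_n)}. -/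

import Mathlib

open scoped BigOperators

open Complex Real

noncomputable section

/-- The Jacobi theta function θ₃(z|τ) = ∑_{n∈ℤ} q^{n²/2} e^{2niz}, where q = e^{2πiτ}. -/
noncomputable def θ₃ (z τ : ℂ) : ℂ :=
  ∑' k : ℤ, Complex.exp (2 * Real.pi * Complex.I * τ * ((k : ℂ) ^ 2 / 2)) *
    Complex.exp (2 * (k : ℂ) * Complex.I * z)

/-- G_{m,n}(y₁,…,y_n|τ) = mn · ∑_{r₁+⋯+r_n=0} q^{(r₁²+⋯+r_n²)/2} e^{2i(r₁y₁+⋯+r_ny_n)}. -/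
noncomputable def G (m n : ℕ) (y : Fin n → ℂ) (τ : ℂ) : ℂ :=
  (m : ℂ) * (n : ℂ) * ∑' r : {r : Fin n → ℤ // ∑ j, r j = 0},
    Complex.exp (2 * Real.pi * Complex.I * τ * ((∑ j, ((r.1 j : ℂ)) ^ 2) / 2)) *
    Complex.exp (2 * Complex.I * ∑ j, (r.1 j : ℂ) * y j)

/-- The summand of the theta series. -/
noncomputable def term (τ w : ℂ) (k : ℤ) : ℂ :=
  Complex.exp (Real.pi * Complex.I * τ * (k : ℂ) ^ 2 + 2 * (k : ℂ) * Complex.I * w)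

lemma term_eq_jacobi (τ w : ℂ) (k : ℤ) : term τ w k = jacobiTheta₂_term k (w / Real.pi) τ := by
  rw [term, jacobiTheta₂_term]
  congr 1
  have hπ : (Real.pi : ℂ) ≠ 0 := by
    exact_mod_cast Real.pi_ne_zero
  field_simp
  ring

lemma summable_norm_term {τ : ℂ} (hτ : 0 < τ.im) (w : ℂ) :
    Summable fun k : ℤ => ‖term τ w k‖ := by
  simp_rw [term_eq_jacobi]
  have h := (summable_jacobiTheta₂_term_iff (w / Real.pi) τ).mpr hτ
  exact h.norm

lemma θ₃_eq (z τ : ℂ) : θ₃ z τ = ∑' k : ℤ, term τ z k := by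
  unfold θ₃ term
  refine tsum_congr fun k => ?_
  rw [← Complex.exp_add]
  congr 1
  ring

lemma summable_norm_pi : ∀ {n : ℕ} (f : Fin n → ℤ → ℂ),
    (∀ j, Summable fun k => ‖f j k‖) →
    Summable fun r : Fin n → ℤ => ‖∏ j, f j (r j)‖ := by
  intro n
  induction n with
  | zero => intro f _; exact Summable.of_finite
  | succ n ih =>
    intro f hf
    have p1 : 0 ≤ fun k : ℤ => ‖f 0 k‖ := fun k => norm_nonneg _
    have p2 : 0 ≤ fun r : Fin n → ℤ => ‖∏ j, f j.succ (r j)‖ := fun r => norm_nonneg _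
    have key := (hf 0).mul_of_nonneg (ih (fun j => f j.succ) fun j => hf j.succ) p1 p2
    have h : Summable fun p : ℤ × (Fin n → ℤ) => ‖f 0 p.1‖ * ‖∏ j, f j.succ (p.2 j)‖ := by
      simpa using key
    refine ((Fin.consEquiv fun _ : Fin (n + 1) => ℤ).summable_iff).mp (h.congr fun p => ?_)
    simp only [Function.comp_apply, Fin.consEquiv_apply]
    rw [Fin.prod_univ_succ, Fin.cons_zero, norm_mul]
    simp only [Fin.cons_succ]

lemma tsum_pi_prod : ∀ {n : ℕ} (f : Fin n → ℤ → ℂ),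
    (∀ j, Summable fun k => ‖f j k‖) →
    (∑' r : Fin n → ℤ, ∏ j, f j (r j)) = ∏ j, ∑' k : ℤ, f j k := by
  intro n
  induction n with
  | zero => intro f _; simp
  | succ n ih =>
    intro f hf
    rw [← (Fin.consEquiv fun _ : Fin (n + 1) => ℤ).tsum_eq]
    have h1 : ∀ p : ℤ × (Fin n → ℤ),
        (∏ j, f j ((Fin.consEquiv fun _ : Fin (n + 1) => ℤ) p j)) = f 0 p.1 * ∏ j, f j.succ (p.2 j) := by
      intro p
      simp only [Fin.consEquiv_apply]
      rw [Fin.prod_univ_succ, Fin.cons_zero]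
      simp only [Fin.cons_succ]
    rw [tsum_congr h1, Fin.prod_univ_succ]
    have := tsum_mul_tsum_of_summable_norm (hf 0)
      (summable_norm_pi (fun j => f j.succ) fun j => hf j.succ)
    rw [← ih (fun j => f j.succ) fun j => hf j.succ] at *
    rw [← this]

lemma sum_root (N : ℕ) (hN : 0 < N) (S : ℤ) :
    ∑ k ∈ Finset.range N, Complex.exp (2 * Real.pi * Complex.I * S * k / N)
      = if (N : ℤ) ∣ S then (N : ℂ) else 0 := by
  have hNC : (N : ℂ) ≠ 0 := Nat.cast_ne_zero.mpr hN.ne'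
  have hterm : ∀ k : ℕ, Complex.exp (2 * Real.pi * Complex.I * S * k / N)
      = Complex.exp (2 * Real.pi * Complex.I * S / N) ^ k := by
    intro k
    rw [← Complex.exp_nat_mul]
    congr 1
    ring
  simp_rw [hterm]
  by_cases h : (N : ℤ) ∣ S
  · rw [if_pos h]
    obtain ⟨t, ht⟩ := h
    have hζ : Complex.exp (2 * Real.pi * Complex.I * S / N) = 1 := by
      have : (2 * Real.pi * Complex.I * S / N : ℂ) = (t : ℂ) * (2 * Real.pi * Complex.I) := by
        rw [ht]; push_cast; field_simp
      rw [this, Complex.exp_int_mul_two_pi_mul_I]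
    simp [hζ]
  · rw [if_neg h]
    have hζ : Complex.exp (2 * Real.pi * Complex.I * S / N) ≠ 1 := by
      intro hc
      rw [Complex.exp_eq_one_iff] at hc
      obtain ⟨t, ht⟩ := hc
      apply h
      refine ⟨t, ?_⟩
      have h2 : (2 * Real.pi * Complex.I : ℂ) ≠ 0 := by
        simp [Real.pi_ne_zero, Complex.I_ne_zero]
      have key : (2 * (Real.pi:ℂ) * Complex.I) * (S : ℂ)
          = (2 * (Real.pi:ℂ) * Complex.I) * ((N : ℂ) * t) := by
        have h4 : (2 * (Real.pi:ℂ) * Complex.I * S / N) * N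
            = ((t : ℂ) * (2 * Real.pi * Complex.I)) * N := by rw [ht]
        rw [div_mul_cancel₀ _ hNC] at h4
        linear_combination h4
      have h5 := mul_left_cancel₀ h2 key
      exact_mod_cast h5
    rw [geom_sum_eq hζ]
    have hN' : Complex.exp (2 * Real.pi * Complex.I * S / N) ^ N = 1 := by
      rw [← Complex.exp_nat_mul]
      have : (N : ℂ) * (2 * Real.pi * Complex.I * S / N) = (S : ℂ) * (2 * Real.pi * Complex.I) := by
        field_simp
      rw [this, Complex.exp_int_mul_two_pi_mul_I]
    rw [hN']
    simp

lemma key_exp (τ z : ℂ) (m n : ℕ) (y : Fin n → ℂ) (hy : ∑ j, y j = 0)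
    (s : ℤ) (ρ : Fin n → ℤ) (h0 : ∑ j, ρ j = 0) :
    ∏ j, term τ (z + y j) (ρ j + m * s)
      = (Complex.exp (2 * Real.pi * Complex.I * τ * ((∑ j, ((ρ j : ℂ)) ^ 2) / 2)) *
          Complex.exp (2 * Complex.I * ∑ j, (ρ j : ℂ) * y j))
        * term ((m : ℂ) ^ 2 * n * τ) (((m : ℂ) * n) * z) s := by
  unfold term
  rw [← Complex.exp_sum, ← Complex.exp_add, ← Complex.exp_add]
  congr 1
  have hρ : ∑ j, ((ρ j : ℂ)) = 0 := by
    rw [← Int.cast_sum, h0, Int.cast_zero]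
  have expand : ∀ j : Fin n,
      (Real.pi : ℂ) * Complex.I * τ * ((((ρ j + m * s : ℤ)) : ℂ)) ^ 2
        + 2 * (((ρ j + m * s : ℤ)) : ℂ) * Complex.I * (z + y j)
      = (Real.pi * Complex.I * τ) * ((ρ j : ℂ)) ^ 2
        + (2 * Real.pi * Complex.I * τ * ((m : ℂ) * s) + 2 * Complex.I * z) * ((ρ j : ℂ))
        + (2 * Complex.I) * ((ρ j : ℂ) * y j)
        + (2 * ((m : ℂ) * s) * Complex.I) * (y j)
        + (Real.pi * Complex.I * τ * ((m : ℂ) * s) ^ 2 + 2 * ((m : ℂ) * s) * Complex.I * z) := by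
    intro j
    push_cast
    ring
  rw [Finset.sum_congr rfl fun j _ => expand j]
  simp only [Finset.sum_add_distrib, ← Finset.mul_sum, Finset.sum_const, Finset.card_univ,
    Fintype.card_fin, nsmul_eq_mul, hρ, hy]
  ring

noncomputable def resEquiv (m n : ℕ) (hm : 0 < m) (hn : 0 < n) :
    ℤ × {ρ : Fin n → ℤ // ∑ j, ρ j = 0} ≃ {r : Fin n → ℤ // ((m * n : ℕ) : ℤ) ∣ ∑ j, r j} where
  toFun p := ⟨fun j => p.2.1 j + m * p.1, by
    have h : ∑ j, (p.2.1 j + (m : ℤ) * p.1) = ((m * n : ℕ) : ℤ) * p.1 := by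
      rw [Finset.sum_add_distrib, p.2.2, Finset.sum_const, Finset.card_univ, Fintype.card_fin]
      push_cast; ring
    rw [h]
    exact Dvd.intro _ rfl⟩
  invFun r :=
    ((∑ j, r.1 j) / ((m * n : ℕ) : ℤ),
      ⟨fun j => r.1 j - m * ((∑ j, r.1 j) / ((m * n : ℕ) : ℤ)), by
        have hN : ((m * n : ℕ) : ℤ) ≠ 0 := by
          exact_mod_cast (Nat.mul_pos hm hn).ne'
        obtain ⟨t, ht⟩ := r.2
        have hdiv : (∑ j, r.1 j) / ((m * n : ℕ) : ℤ) = t := by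
          rw [ht, Int.mul_ediv_cancel_left _ hN]
        rw [Finset.sum_sub_distrib, Finset.sum_const, Finset.card_univ, Fintype.card_fin,
          sub_eq_zero, hdiv, ht, nsmul_eq_mul]
        push_cast
        ring⟩)
  left_inv p := by
    have hN : ((m * n : ℕ) : ℤ) ≠ 0 := by exact_mod_cast (Nat.mul_pos hm hn).ne'
    have h : ∑ j, (p.2.1 j + (m : ℤ) * p.1) = ((m * n : ℕ) : ℤ) * p.1 := by
      rw [Finset.sum_add_distrib, p.2.2, Finset.sum_const, Finset.card_univ, Fintype.card_fin]
      push_cast; ring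
    have hs : (∑ j, (p.2.1 j + (m : ℤ) * p.1)) / ((m * n : ℕ) : ℤ) = p.1 := by
      rw [h, Int.mul_ediv_cancel_left _ hN]
    ext
    · exact hs
    · show p.2.1 _ + (m : ℤ) * p.1 - m * ((∑ j, (p.2.1 j + (m : ℤ) * p.1)) / ((m * n : ℕ) : ℤ)) = _
      rw [hs]; ring
  right_inv r := by
    apply Subtype.ext
    funext j
    show r.1 j - (m : ℤ) * _ + (m : ℤ) * _ = r.1 j
    ring

set_option maxHeartbeats 1000000 in
theorem circular_summation (τ : ℂ) (hτ : 0 < τ.im) (m n : ℕ) (hm : 0 < m) (hn : 0 < n)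
    (y : Fin n → ℂ) (hy : ∑ j, y j = 0) (z : ℂ) :
    ∑ k ∈ Finset.range (m * n),
      ∏ j, θ₃ (z + y j + (k : ℂ) * Real.pi / ((m : ℂ) * n)) τ
    = G m n y τ * θ₃ (((m : ℂ) * n) * z) ((m : ℂ) ^ 2 * n * τ) := by
  classical
  have hNpos : 0 < m * n := Nat.mul_pos hm hn
  have hNC : ((m * n : ℕ) : ℂ) ≠ 0 := by exact_mod_cast hNpos.ne'
  have hmnC : ((m : ℂ) * n) ≠ 0 := by
    have : ((m * n : ℕ) : ℂ) = (m : ℂ) * n := by push_cast; ring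
    rw [← this]; exact hNC
  have hterm : ∀ w : ℂ, Summable fun k : ℤ => ‖term τ w k‖ := fun w => summable_norm_term hτ w
  have h2τ : 0 < ((m : ℂ) ^ 2 * n * τ).im := by
    have h : (m : ℂ) ^ 2 * n * τ = (((m ^ 2 * n : ℕ) : ℝ) : ℂ) * τ := by push_cast; ring
    have h' : (m : ℂ) ^ 2 * n * τ = ((((m ^ 2 * n : ℕ) : ℝ)) : ℂ) * τ := by push_cast; ring
    rw [h', Complex.im_ofReal_mul]
    have : 0 < ((m ^ 2 * n : ℕ) : ℝ) := by positivity
    exact mul_pos this hτ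
  -- Step 1: each product of thetas as a tsum over `Fin n → ℤ`
  have step1 : ∀ k : ℕ, (∏ j, θ₃ (z + y j + (k : ℂ) * Real.pi / ((m : ℂ) * n)) τ)
      = ∑' r : Fin n → ℤ, ∏ j, term τ (z + y j + (k : ℂ) * Real.pi / ((m : ℂ) * n)) (r j) := by
    intro k
    rw [tsum_pi_prod (fun j => term τ (z + y j + (k : ℂ) * Real.pi / ((m : ℂ) * n)))
      (fun j => hterm _)]
    exact Finset.prod_congr rfl fun j _ => θ₃_eq _ _
  rw [Finset.sum_congr rfl fun k _ => step1 k]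
  -- Step 2: swap the finite sum with the tsum
  rw [← Summable.tsum_finsetSum (f := fun (k : ℕ) (r : Fin n → ℤ) =>
      ∏ j, term τ (z + y j + (k : ℂ) * Real.pi / ((m : ℂ) * n)) (r j))
      (s := Finset.range (m * n))
      (fun k _ => (summable_norm_pi _ fun j => hterm _).of_norm)]
  -- Step 3: evaluate the inner finite sum
  have step3 : ∀ r : Fin n → ℤ,
      (∑ k ∈ Finset.range (m * n),
        ∏ j, term τ (z + y j + (k : ℂ) * Real.pi / ((m : ℂ) * n)) (r j))
      = (∏ j, term τ (z + y j) (r j)) *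
        (if ((m * n : ℕ) : ℤ) ∣ ∑ j, r j then ((m * n : ℕ) : ℂ) else 0) := by
    intro r
    have hsplit : ∀ k : ℕ,
        (∏ j, term τ (z + y j + (k : ℂ) * Real.pi / ((m : ℂ) * n)) (r j))
        = (∏ j, term τ (z + y j) (r j)) *
          Complex.exp (2 * Real.pi * Complex.I * (((∑ j, r j : ℤ)) : ℂ) * (k : ℂ)
            / ((m * n : ℕ) : ℂ)) := by
      intro k
      unfold term
      rw [← Complex.exp_sum, ← Complex.exp_sum, ← Complex.exp_add]
      congr 1
      have hmn : ((m * n : ℕ) : ℂ) = (m : ℂ) * n := by push_cast; ring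
      have hexp : ∀ j : Fin n,
          (Real.pi : ℂ) * Complex.I * τ * ((r j : ℂ)) ^ 2
            + 2 * ((r j : ℂ)) * Complex.I * (z + y j + (k : ℂ) * Real.pi / ((m : ℂ) * n))
          = ((Real.pi : ℂ) * Complex.I * τ * ((r j : ℂ)) ^ 2
            + 2 * ((r j : ℂ)) * Complex.I * (z + y j))
            + (2 * Real.pi * Complex.I * (k : ℂ) / ((m * n : ℕ) : ℂ)) * ((r j : ℂ)) := by
        intro j
        rw [hmn]
        field_simp
        ring
      rw [Finset.sum_congr rfl fun j _ => hexp j, Finset.sum_add_distrib, ← Finset.mul_sum]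
      rw [← Int.cast_sum]
      ring
    rw [Finset.sum_congr rfl fun k _ => hsplit k, ← Finset.mul_sum,
      sum_root (m * n) hNpos (∑ j, r j)]
  rw [tsum_congr step3]
  -- Step 4: restrict to the subtype where `m*n` divides the sum
  have hsupp : Function.support (fun r : Fin n → ℤ =>
      (∏ j, term τ (z + y j) (r j)) *
        (if ((m * n : ℕ) : ℤ) ∣ ∑ j, r j then ((m * n : ℕ) : ℂ) else 0))
      ⊆ {r : Fin n → ℤ | ((m * n : ℕ) : ℤ) ∣ ∑ j, r j} := by
    intro r hr
    by_contra hc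
    have hc' : ¬ ((m * n : ℕ) : ℤ) ∣ ∑ j, r j := hc
    exact hr (by simp only [if_neg hc', mul_zero])
  rw [← tsum_subtype_eq_of_support_subset hsupp]
  have step4 : ∀ r : ↑{r : Fin n → ℤ | ((m * n : ℕ) : ℤ) ∣ ∑ j, r j},
      (∏ j, term τ (z + y j) (r.1 j)) *
        (if ((m * n : ℕ) : ℤ) ∣ ∑ j, r.1 j then ((m * n : ℕ) : ℂ) else 0)
      = ((m * n : ℕ) : ℂ) * ∏ j, term τ (z + y j) (r.1 j) := by
    intro r
    have hr : ((m * n : ℕ) : ℤ) ∣ ∑ j, r.1 j := r.2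
    rw [if_pos hr, mul_comm]
  rw [tsum_congr step4]
  -- Step 5/6: reindex via the equivalence and factor the summand
  let E : ℤ × {ρ : Fin n → ℤ // ∑ j, ρ j = 0} ≃
      ↑{r : Fin n → ℤ | ((m * n : ℕ) : ℤ) ∣ ∑ j, r j} := resEquiv m n hm hn
  rw [← E.tsum_eq]
  have step6 : ∀ p : ℤ × {ρ : Fin n → ℤ // ∑ j, ρ j = 0},
      ((m * n : ℕ) : ℂ) * ∏ j, term τ (z + y j) ((E p).1 j)
      = term ((m : ℂ) ^ 2 * n * τ) (((m : ℂ) * n) * z) p.1 *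
        (((m * n : ℕ) : ℂ) *
          (Complex.exp (2 * Real.pi * Complex.I * τ * ((∑ j, ((p.2.1 j : ℂ)) ^ 2) / 2)) *
            Complex.exp (2 * Complex.I * ∑ j, (p.2.1 j : ℂ) * y j))) := by
    intro p
    have hE : (E p).1 = fun j => p.2.1 j + m * p.1 := rfl
    rw [hE, key_exp τ z m n y hy p.1 p.2.1 p.2.2]
    ring
  rw [tsum_congr step6]
  -- Step 7: split the tsum over the product type
  have hAval : ∀ ρ : {ρ : Fin n → ℤ // ∑ j, ρ j = 0},
      (∏ j, term τ (0 + y j) (ρ.1 j))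
      = Complex.exp (2 * Real.pi * Complex.I * τ * ((∑ j, ((ρ.1 j : ℂ)) ^ 2) / 2)) *
          Complex.exp (2 * Complex.I * ∑ j, (ρ.1 j : ℂ) * y j) := by
    intro ρ
    have h := key_exp τ 0 m n y hy 0 ρ.1 ρ.2
    have h1 : ∀ j : Fin n, ρ.1 j + (m : ℤ) * 0 = ρ.1 j := fun j => by ring
    have hterm0 : term ((m : ℂ) ^ 2 * n * τ) (((m : ℂ) * n) * 0) 0 = 1 := by
      unfold term
      simp
    rw [Finset.prod_congr rfl fun j _ => congrArg (term τ (0 + y j)) (h1 j).symm] at *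
    rw [h, hterm0, mul_one]
  have hAfull : Summable fun ρ : Fin n → ℤ => ‖∏ j, term τ (0 + y j) (ρ j)‖ :=
    summable_norm_pi _ (fun j => hterm _)
  have hAsub : Summable ((fun ρ : Fin n → ℤ => ‖∏ j, term τ (0 + y j) (ρ j)‖) ∘
      (Subtype.val : {ρ : Fin n → ℤ // ∑ j, ρ j = 0} → (Fin n → ℤ))) :=
    hAfull.subtype _
  have hA : Summable fun ρ : {ρ : Fin n → ℤ // ∑ j, ρ j = 0} =>
      ‖Complex.exp (2 * Real.pi * Complex.I * τ * ((∑ j, ((ρ.1 j : ℂ)) ^ 2) / 2)) *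
          Complex.exp (2 * Complex.I * ∑ j, (ρ.1 j : ℂ) * y j)‖ := by
    refine hAsub.congr fun ρ => ?_
    simp only [Function.comp_apply]
    rw [hAval ρ]
  have hA' : Summable fun ρ : {ρ : Fin n → ℤ // ∑ j, ρ j = 0} =>
      ‖((m * n : ℕ) : ℂ) *
        (Complex.exp (2 * Real.pi * Complex.I * τ * ((∑ j, ((ρ.1 j : ℂ)) ^ 2) / 2)) *
          Complex.exp (2 * Complex.I * ∑ j, (ρ.1 j : ℂ) * y j))‖ := by
    exact (hA.mul_left ‖((m * n : ℕ) : ℂ)‖).congr fun ρ => (norm_mul _ _).symm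
  have hB : Summable fun s : ℤ => ‖term ((m : ℂ) ^ 2 * n * τ) (((m : ℂ) * n) * z) s‖ :=
    summable_norm_term h2τ _
  rw [← tsum_mul_tsum_of_summable_norm hB hA']
  rw [tsum_mul_left, ← θ₃_eq]
  rw [G]
  have hNcast : ((m * n : ℕ) : ℂ) = (m : ℂ) * (n : ℂ) := by push_cast; ring
  rw [hNcast]
  ring

end
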